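/- Let r > 0 and set c = (1 + r)/√r. Define δ_0 = 0 and δ_t = −1/(c + δ_{t−1}) for t ≥ 1. Then: (i) the equation δ = −1/(c + δ) has exactly the solutions δ = −√r and δ = −1/√r; (ii) the sequence (δ_t) is well defined (c + δ_{t−1} ≠ 0 for all t) and converges, with limit −min(√r, 1/√r); that is, the limit is −1/√r when r ≥ 1 and −√r when r ≤ 1. -/

import Mathlib

open Filter

/-- Let `r > 0`, `c = (1 + r)/√r`, `δ₀ = 0` and `δ_t = −1/(c + δ_{t−1})`. Then:
(i) the fixed-point equation `δ = −1/(c + δ)` has exactly the solutions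
`δ = −√r` and `δ = −1/√r`; (ii) the sequence is well defined
(`c + δ_t ≠ 0` for all `t`) and converges to `−min(√r, 1/√r)`, i.e. to `−1/√r`
when `r ≥ 1` and to `−√r` when `r ≤ 1`. -/
theorem mp_momentum_coefficients_limit
    (r : ℝ) (hr : 0 < r) (c : ℝ) (hc : c = (1 + r) / Real.sqrt r)
    (δ : ℕ → ℝ) (hδ0 : δ 0 = 0)
    (hrec : ∀ t : ℕ, 1 ≤ t → δ t = -1 / (c + δ (t - 1))) :
    (∀ x : ℝ, x = -1 / (c + x) ↔ (x = -Real.sqrt r ∨ x = -1 / Real.sqrt r)) ∧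
    (∀ t : ℕ, c + δ t ≠ 0) ∧
    Tendsto δ atTop (nhds (-(min (Real.sqrt r) (1 / Real.sqrt r)))) := by
  set s := Real.sqrt r with hs
  have hs0 : 0 < s := Real.sqrt_pos.mpr hr
  have hss : s * s = r := Real.mul_self_sqrt hr.le
  have hcs : c = s + 1/s := by
    rw [hc, ← hss]; field_simp; ring
  set m := min s (1/s) with hm
  set M := max s (1/s) with hM
  have hm0 : 0 < m := lt_min hs0 (by positivity)
  have hmM : m * M = 1 := by
    rw [hm, hM, min_mul_max]; field_simp
  have hcmM : c = m + M := by rw [hcs, hm, hM, min_add_max]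
  have hM0 : 0 < M := lt_of_lt_of_le hs0 (le_max_left _ _)
  have hms : m ≤ s := min_le_left _ _
  have hminv : m ≤ 1/s := min_le_right _ _
  -- Part (i)
  have hiff : ∀ x : ℝ, x = -1 / (c + x) ↔ (x = -s ∨ x = -1/s) := by
    intro x
    constructor
    · intro h
      by_cases hcx : c + x = 0
      · rw [hcx, div_zero] at h
        exfalso
        have hc0 : 0 < c := by rw [hcs]; positivity
        rw [h, add_zero] at hcx
        linarith
      · have h2 : x * (c + x) = -1 := by
          rw [eq_div_iff hcx] at h; linarith
        have h3 : (x + s) * (s * x + 1) = 0 := by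
          have he : (x + s) * (s * x + 1) = s * (x * (c + x) + 1) := by
            rw [hcs]; field_simp; ring
          rw [he, h2]; ring
        rcases mul_eq_zero.mp h3 with h4 | h4
        · left; linarith
        · right
          field_simp
          linarith
    · rintro (h | h)
      · rw [h]
        have he : c + -s = 1/s := by rw [hcs]; ring
        rw [he]
        field_simp
      · rw [h]
        have he : c + -1/s = s := by rw [hcs]; field_simp; ring
        rw [he]
  -- recursion in convenient form
  have hrec' : ∀ t : ℕ, δ (t+1) = -1 / (c + δ t) := fun t => by
    simpa using hrec (t+1) (Nat.le_add_left 1 t)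
  -- bounds
  have hbound : ∀ t, -m ≤ δ t ∧ δ t ≤ 0 := by
    intro t
    induction t with
    | zero => rw [hδ0]; exact ⟨neg_nonpos.mpr hm0.le, le_refl 0⟩
    | succ n ih =>
      have hp : 0 < c + δ n := by rw [hcmM]; linarith [ih.1]
      rw [hrec']
      constructor
      · have hle : M ≤ c + δ n := by rw [hcmM] at hp ⊢; linarith [ih.1]
        have h1 : 1 / (c + δ n) ≤ 1 / M := one_div_le_one_div_of_le hM0 hle
        have hMinv : 1 / M = m := by
          field_simp
          linarith [hmM]
        rw [neg_div]
        linarith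
      · rw [neg_div]
        have : 0 < 1 / (c + δ n) := by positivity
        linarith
  have hpos : ∀ t, 0 < c + δ t := fun t => by
    rw [hcmM]; linarith [(hbound t).1]
  -- monotonicity
  have hanti : Antitone δ := by
    apply antitone_nat_of_succ_le
    intro n
    have h1 := (hbound n).1
    have hp := hpos n
    rw [hrec', div_le_iff₀ hp]
    have hfac : 0 ≤ (δ n + s) * (s * δ n + 1) := by
      have ha : 0 ≤ δ n + s := by linarith
      have hb : 0 ≤ s * δ n + 1 := by
        have : δ n + 1/s ≥ 0 := by linarith
        nlinarith
      exact mul_nonneg ha hb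
    have hexp : (δ n + s) * (s * δ n + 1) = s * (δ n * (c + δ n) + 1) := by
      rw [hcs]; field_simp; ring
    nlinarith [hfac, hexp]
  -- convergence
  have hbdd : BddBelow (Set.range δ) := ⟨-m, by rintro x ⟨t, rfl⟩; exact (hbound t).1⟩
  set L := ⨅ t, δ t with hL
  have hLt : Tendsto δ atTop (nhds L) := tendsto_atTop_ciInf hanti hbdd
  have hL1 : -m ≤ L := le_ciInf fun t => (hbound t).1
  have hcL : 0 < c + L := by rw [hcmM]; linarith
  have h1 : Tendsto (fun t => δ (t+1)) atTop (nhds L) := hLt.comp (tendsto_add_atTop_nat 1)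
  have h2 : Tendsto (fun t => -1 / (c + δ t)) atTop (nhds (-1 / (c + L))) :=
    Tendsto.div tendsto_const_nhds (tendsto_const_nhds.add hLt) hcL.ne'
  have h2' : Tendsto (fun t => δ (t+1)) atTop (nhds (-1 / (c + L))) := by
    simpa only [← hrec'] using h2
  have hLeq : L = -1 / (c + L) := tendsto_nhds_unique h1 h2'
  have hLm : L = -m := by
    rcases (hiff L).mp hLeq with h | h
    · have : s ≤ m := by linarith
      have : m = s := le_antisymm hms this
      rw [h, this]
    · have : 1/s ≤ m := by rw [h, neg_div] at hL1; linarith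
      have : m = 1/s := le_antisymm hminv this
      rw [h, this, neg_div]
  refine ⟨hiff, fun t => (hpos t).ne', ?_⟩
  rw [← hLm]
  exact hLt
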